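/- Let A be a symmetric positive semidefinite n×n real matrix (n ≥ 2), b ∈ ℝⁿ, f(x) = (1/2)⟨Ax, x⟩ − ⟨b, x⟩, R > 0, and S̄_n(R) = {x ∈ ℝⁿ : xᵢ ≥ 0 for all i, Σᵢ xᵢ ≤ R}. Let x* minimize f over S̄_n(R), and consider Frank–Wolfe iterates on S̄_n(R): x¹ ∈ S̄_n(R), y^k ∈ S̄_n(R) with ⟨∇f(x^k), y^k⟩ ≤ ⟨∇f(x^k), z⟩ for all z ∈ S̄_n(R), and x^{k+1} = (1 − γ_k) x^k + γ_k y^k, γ_k = 2/(k+1). Then for every N ≥ 2, f(x^N) − f(x*) ≤ 8 max_{i,j} |A_{ij}| R² / (N + 1). -/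

import Mathlib

/-- Frank–Wolfe on the full-dimensional simplex `S̄_n(R) = {x : xᵢ ≥ 0, Σxᵢ ≤ R}` for a
quadratic `f x = (1/2)⟨Ax,x⟩ - ⟨b,x⟩` (`A` symmetric PSD, `n ≥ 2`), with steps
`γ_k = 2/(k+1)`: for every `N ≥ 2`, `f(x^N) - f(x*) ≤ 8 max_{i,j}|A_{ij}| R² / (N+1)`. -/
theorem stmt5 {n : ℕ} (hn : 2 ≤ n) (A : Matrix (Fin n) (Fin n) ℝ) (hA : A.PosSemidef)
    (b : Fin n → ℝ) (f : (Fin n → ℝ) → ℝ)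
    (hf : ∀ x, f x = (1 / 2) * (∑ i, A.mulVec x i * x i) - ∑ i, b i * x i)
    (R : ℝ) (hR : 0 < R)
    (S : Set (Fin n → ℝ))
    (hS : S = {x | (∀ i, 0 ≤ x i) ∧ (∑ i, x i) ≤ R})
    (M : ℝ) (hM : IsGreatest {v | ∃ i j, v = |A i j|} M)
    (xstar : Fin n → ℝ) (hxstar : xstar ∈ S) (hmin : ∀ z ∈ S, f xstar ≤ f z)
    (x y : ℕ → Fin n → ℝ) (hx1 : x 1 ∈ S)
    (hy : ∀ k, 1 ≤ k → y k ∈ S ∧ ∀ z ∈ S,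
      (∑ i, (A.mulVec (x k) i - b i) * y k i) ≤ ∑ i, (A.mulVec (x k) i - b i) * z i)
    (hupd : ∀ k, 1 ≤ k →
      x (k + 1) = (1 - 2 / ((k : ℝ) + 1)) • x k + (2 / ((k : ℝ) + 1)) • y k)
    (N : ℕ) (hN : 2 ≤ N) :
    f (x N) - f xstar ≤ 8 * M * R ^ 2 / ((N : ℝ) + 1) := by
  -- basic facts
  obtain ⟨i0, j0, hMeq⟩ := hM.1
  have hM0 : 0 ≤ M := hMeq ▸ abs_nonneg _
  have hMle : ∀ i j, |A i j| ≤ M := fun i j => hM.2 ⟨i, j, rfl⟩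
  have hsymA : ∀ i j, A i j = A j i := fun i j => by
    have := congrFun (congrFun hA.1 i) j
    simpa [Matrix.conjTranspose_apply] using this.symm
  have hsB : ∀ u v : Fin n → ℝ, ∑ i, A.mulVec u i * v i = ∑ i, A.mulVec v i * u i := by
    intro u v
    simp only [Matrix.mulVec, dotProduct, Finset.sum_mul]
    rw [Finset.sum_comm]
    exact Finset.sum_congr rfl fun i _ => Finset.sum_congr rfl fun j _ => by rw [hsymA]; ring
  have hQ0 : ∀ w : Fin n → ℝ, 0 ≤ ∑ i, A.mulVec w i * w i := fun w => by
    have := hA.dotProduct_mulVec_nonneg w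
    simpa [dotProduct, mul_comm] using this
  have expand : ∀ u v : Fin n → ℝ, f v = f u + (∑ i, (A.mulVec u i - b i) * ((v - u) i))
      + (1/2) * ∑ i, A.mulVec (v - u) i * ((v - u) i) := by
    intro u v
    have hs := hsB u v
    rw [hf, hf]
    simp only [Matrix.mulVec_sub, Pi.sub_apply, sub_mul, mul_sub, Finset.sum_sub_distrib]
    ring_nf
    ring_nf at hs
    linarith
  have hQle : ∀ w : Fin n → ℝ, ∑ i, A.mulVec w i * w i ≤ M * (∑ i, |w i|)^2 := by
    intro w
    calc ∑ i, A.mulVec w i * w i ≤ ∑ i, ∑ j, M * |w j| * |w i| := by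
          refine Finset.sum_le_sum fun i _ => ?_
          rw [show A.mulVec w i * w i = ∑ j, A i j * w j * w i from by
            simp [Matrix.mulVec, dotProduct, Finset.sum_mul]]
          refine Finset.sum_le_sum fun j _ => ?_
          calc A i j * w j * w i ≤ |A i j * w j * w i| := le_abs_self _
            _ = |A i j| * |w j| * |w i| := by rw [abs_mul, abs_mul]
            _ ≤ M * |w j| * |w i| := by
                have h0 := hMle i j
                have h1 : (0:ℝ) ≤ |w j| := abs_nonneg _
                have h2 : (0:ℝ) ≤ |w i| := abs_nonneg _
                nlinarith [mul_le_mul_of_nonneg_right (mul_le_mul_of_nonneg_right h0 h1) h2]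
      _ = M * (∑ i, |w i|)^2 := by
          rw [sq, Finset.sum_mul_sum, Finset.mul_sum]
          refine Finset.sum_congr rfl fun i _ => ?_
          rw [Finset.mul_sum]
          exact Finset.sum_congr rfl fun j _ => by ring
  -- sum of absolute differences between points of S
  have hsumabs : ∀ u ∈ S, ∀ v ∈ S, ∑ i, |(v - u) i| ≤ 2 * R := by
    intro u hu v hv
    rw [hS] at hu hv
    calc ∑ i, |(v - u) i| ≤ ∑ i, (v i + u i) := by
          refine Finset.sum_le_sum fun i _ => ?_
          have h1 := hu.1 i; have h2 := hv.1 i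
          rw [Pi.sub_apply]
          rw [abs_le]; constructor <;> [linarith; linarith]
      _ = (∑ i, v i) + ∑ i, u i := Finset.sum_add_distrib
      _ ≤ 2 * R := by linarith [hu.2, hv.2]
  -- convexity of S
  have hconv : ∀ t : ℝ, 0 ≤ t → t ≤ 1 → ∀ u ∈ S, ∀ v ∈ S, (1 - t) • u + t • v ∈ S := by
    intro t ht0 ht1 u hu v hv
    rw [hS] at hu hv ⊢
    have ht0' : 0 ≤ 1 - t := by linarith
    constructor
    · intro i
      simp only [Pi.add_apply, Pi.smul_apply, smul_eq_mul]
      have := hu.1 i; have := hv.1 i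
      positivity
    · simp only [Pi.add_apply, Pi.smul_apply, smul_eq_mul, Finset.sum_add_distrib,
        ← Finset.mul_sum]
      nlinarith [hu.2, hv.2]
  -- iterates stay in S
  have hmem : ∀ k, 1 ≤ k → x k ∈ S := by
    intro k hk
    induction k, hk using Nat.le_induction with
    | base => exact hx1
    | succ k hk ih =>
      rw [hupd k hk]
      refine hconv _ (by positivity) ?_ _ ih _ (hy k hk).1
      rw [div_le_one (by positivity)]
      have : (1:ℝ) ≤ (k:ℝ) := by exact_mod_cast hk
      linarith
  -- gradient inequality via convexity
  have hgrad : ∀ k, 1 ≤ k →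
      ∑ i, (A.mulVec (x k) i - b i) * (y k i - x k i) ≤ f xstar - f (x k) := by
    intro k hk
    have h1 := (hy k hk).2 xstar hxstar
    have h2 := expand (x k) xstar
    have h3 := hQ0 (xstar - x k)
    have e1 : ∑ i, (A.mulVec (x k) i - b i) * (y k i - x k i)
        = (∑ i, (A.mulVec (x k) i - b i) * y k i) - ∑ i, (A.mulVec (x k) i - b i) * x k i := by
      simp [mul_sub, Finset.sum_sub_distrib]
    have e2 : ∑ i, (A.mulVec (x k) i - b i) * ((xstar - x k) i)
        = (∑ i, (A.mulVec (x k) i - b i) * xstar i) - ∑ i, (A.mulVec (x k) i - b i) * x k i := by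
      simp [Pi.sub_apply, mul_sub, Finset.sum_sub_distrib]
    rw [e2] at h2
    linarith
  -- one-step recursion
  have key : ∀ k : ℕ, 1 ≤ k → f (x (k+1)) - f xstar ≤
      (1 - 2/((k:ℝ)+1)) * (f (x k) - f xstar) + 8/(((k:ℝ)+1)^2) * (M * R^2) := by
    intro k hk
    set γ : ℝ := 2/((k:ℝ)+1) with hγdef
    have hγ0 : 0 ≤ γ := by positivity
    have hxk := hmem k hk
    have hyk := (hy k hk).1
    have hdiff : x (k+1) - x k = γ • (y k - x k) := by
      rw [hupd k hk]; funext i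
      simp only [Pi.sub_apply, Pi.add_apply, Pi.smul_apply, smul_eq_mul]
      ring
    have hexp := expand (x k) (x (k+1))
    rw [hdiff] at hexp
    have hlin : ∑ i, (A.mulVec (x k) i - b i) * ((γ • (y k - x k)) i)
        = γ * ∑ i, (A.mulVec (x k) i - b i) * (y k i - x k i) := by
      rw [Finset.mul_sum]
      exact Finset.sum_congr rfl fun i _ => by
        simp only [Pi.smul_apply, Pi.sub_apply, smul_eq_mul]; ring
    have hquad : ∑ i, A.mulVec (γ • (y k - x k)) i * ((γ • (y k - x k)) i)
        = γ^2 * ∑ i, A.mulVec (y k - x k) i * ((y k - x k) i) := by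
      rw [Matrix.mulVec_smul, Finset.mul_sum]
      exact Finset.sum_congr rfl fun i _ => by
        simp only [Pi.smul_apply, smul_eq_mul]; ring
    rw [hlin, hquad] at hexp
    have hQb : ∑ i, A.mulVec (y k - x k) i * ((y k - x k) i) ≤ 4 * (M * R^2) := by
      calc ∑ i, A.mulVec (y k - x k) i * ((y k - x k) i)
          ≤ M * (∑ i, |(y k - x k) i|)^2 := hQle _
        _ ≤ M * (2*R)^2 := by
            have hle := hsumabs (x k) hxk (y k) hyk
            have hnn : 0 ≤ ∑ i, |(y k - x k) i| := Finset.sum_nonneg fun i _ => abs_nonneg _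
            have := pow_le_pow_left₀ hnn hle 2
            nlinarith
        _ = 4 * (M * R^2) := by ring
    have hg := hgrad k hk
    have hγle : γ * (∑ i, (A.mulVec (x k) i - b i) * (y k i - x k i))
        ≤ γ * (f xstar - f (x k)) := mul_le_mul_of_nonneg_left hg hγ0
    have hq2 : (1/2) * (γ^2 * ∑ i, A.mulVec (y k - x k) i * ((y k - x k) i))
        ≤ 2 * γ^2 * (M * R^2) := by nlinarith [sq_nonneg γ]
    have hγsq : 2 * γ^2 * (M * R^2) = 8/(((k:ℝ)+1)^2) * (M * R^2) := by
      rw [hγdef, div_pow]; ring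
    have e3 : (1 - γ) * (f (x k) - f xstar)
        = (f (x k) - f xstar) - γ * (f (x k) - f xstar) := by ring
    have e4 : γ * (f xstar - f (x k)) = -(γ * (f (x k) - f xstar)) := by ring
    rw [hγsq] at hq2
    linarith
  -- main induction
  induction N, hN using Nat.le_induction with
  | base =>
    have h := key 1 le_rfl
    norm_num at h ⊢
    nlinarith [mul_nonneg hM0 (sq_nonneg R)]
  | succ k hk ih =>
    have h := key k (by omega)
    have hk2 : (2:ℝ) ≤ (k:ℝ) := by exact_mod_cast hk
    have hγ1 : 0 ≤ 1 - 2/((k:ℝ)+1) := by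
      rw [sub_nonneg, div_le_one (by positivity)]; linarith
    have h2 : (1 - 2/((k:ℝ)+1)) * (f (x k) - f xstar)
        ≤ (1 - 2/((k:ℝ)+1)) * (8*M*R^2/((k:ℝ)+1)) := mul_le_mul_of_nonneg_left ih hγ1
    have h3 : (1 - 2/((k:ℝ)+1)) * (8*M*R^2/((k:ℝ)+1)) + 8/(((k:ℝ)+1)^2) * (M*R^2)
        ≤ 8*M*R^2/(((k:ℝ)+1)+1) := by
      have h4 : (1 - 2/((k:ℝ)+1)) * (8*M*R^2/((k:ℝ)+1)) + 8/(((k:ℝ)+1)^2) * (M*R^2)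
          = (8*M*R^2*(k:ℝ)) / (((k:ℝ)+1)^2) := by
        field_simp
        ring
      rw [h4, div_le_div_iff₀ (by positivity) (by positivity)]
      nlinarith [mul_nonneg hM0 (sq_nonneg R), hk2]
    push_cast
    linarith
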